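/- Let h(z) = 1 + a z + b z^2 with a, b positive integers. Then all coefficients of the formal power series 1 − h(−z)/(1−z)^a are non-negative if and only if a > b. -/

import Mathlib

open PowerSeries Polynomial

private lemma key_id (N m : ℕ) :
    (m + 1) * ((m + 1 + N).choose N) = (m + 1 + N) * ((m + N).choose N) := by
  have h1 := Nat.add_one_mul_choose_eq (m + N) N
  have h2 := Nat.choose_succ_right_eq (m + N + 1) N
  have h3 : m + N + 1 - N = m + 1 := by omega
  have h4 : m + 1 + N = m + N + 1 := by omega
  rw [h4]
  calc (m + 1) * ((m + N + 1).choose N)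
      = (m + N + 1).choose N * (m + N + 1 - N) := by rw [h3, mul_comm]
    _ = (m + N + 1).choose (N + 1) * (N + 1) := h2.symm
    _ = (m + N + 1) * ((m + N).choose N) := h1.symm

private lemma coeff2 (α β : ℤ) (f : ℕ → ℤ) (n : ℕ) :
    PowerSeries.coeff (R := ℤ) (n + 2)
      ((1 - PowerSeries.C α * PowerSeries.X + PowerSeries.C β * PowerSeries.X ^ 2) *
        PowerSeries.mk f)
    = f (n + 2) - α * f (n + 1) + β * f n := by
  rw [add_mul, sub_mul, one_mul, mul_assoc, mul_assoc, map_add, map_sub,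
    PowerSeries.coeff_C_mul, PowerSeries.coeff_C_mul]
  rw [show n + 2 = n + 1 + 1 from rfl, PowerSeries.coeff_succ_X_mul]
  rw [show n + 1 + 1 = n + 2 from rfl, PowerSeries.coeff_X_pow_mul]
  simp [PowerSeries.coeff_mk]

private lemma coeff1 (α β : ℤ) (f : ℕ → ℤ) :
    PowerSeries.coeff (R := ℤ) 1
      ((1 - PowerSeries.C α * PowerSeries.X + PowerSeries.C β * PowerSeries.X ^ 2) *
        PowerSeries.mk f)
    = f 1 - α * f 0 := by
  rw [add_mul, sub_mul, one_mul, mul_assoc, mul_assoc, map_add, map_sub,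
    PowerSeries.coeff_C_mul, PowerSeries.coeff_C_mul]
  rw [show (1:ℕ) = 0 + 1 from rfl, PowerSeries.coeff_succ_X_mul]
  rw [pow_two, mul_assoc, PowerSeries.coeff_succ_X_mul]
  simp [PowerSeries.coeff_mk]

private lemma coeff0 (α β : ℤ) (f : ℕ → ℤ) :
    PowerSeries.coeff (R := ℤ) 0
      ((1 - PowerSeries.C α * PowerSeries.X + PowerSeries.C β * PowerSeries.X ^ 2) *
        PowerSeries.mk f)
    = f 0 := by
  rw [add_mul, sub_mul, one_mul, mul_assoc, mul_assoc, map_add, map_sub,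
    PowerSeries.coeff_C_mul, PowerSeries.coeff_C_mul]
  simp [PowerSeries.coeff_zero_eq_constantCoeff, PowerSeries.coeff_mk]

/-- For `h(z) = 1 + a z + b z²` with `a, b` positive integers, all the
coefficients of the formal power series `1 - h(-z)/(1-z)^a` are non-negative
if and only if `a > b`. -/
theorem stmt3 (a b : ℕ) (ha : 0 < a) (hb : 0 < b) :
    (∀ n : ℕ, 0 ≤ PowerSeries.coeff (R := ℤ) n
      (1 - (↑((1 + Polynomial.C (a : ℤ) * Polynomial.X +
          Polynomial.C (b : ℤ) * Polynomial.X ^ 2).comp (-Polynomial.X)) : PowerSeries ℤ) *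
        PowerSeries.mk fun m => ((m + a - 1).choose (a - 1) : ℤ))) ↔ b < a := by
  obtain ⟨N, rfl⟩ : ∃ N, a = N + 1 := ⟨a - 1, by omega⟩
  set c : ℕ → ℕ := fun m => (m + N).choose N with hc
  have hfc : ∀ m : ℕ, ((m + (N + 1) - 1).choose (N + 1 - 1) : ℤ) = (c m : ℤ) := by
    intro m
    simp [hc, show m + (N + 1) - 1 = m + N by omega]
  have hpolyc : (1 + Polynomial.C ((N+1:ℕ) : ℤ) * Polynomial.X +
      Polynomial.C (b : ℤ) * Polynomial.X ^ 2).comp (-Polynomial.X)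
      = 1 - Polynomial.C ((N+1:ℕ) : ℤ) * Polynomial.X + Polynomial.C (b : ℤ) * Polynomial.X ^ 2 := by
    simp [Polynomial.add_comp, Polynomial.mul_comp, Polynomial.C_comp, Polynomial.X_comp,
      Polynomial.pow_comp, Polynomial.one_comp]
    ring
  have hcoe : (((1 - Polynomial.C ((N+1:ℕ) : ℤ) * Polynomial.X +
      Polynomial.C (b : ℤ) * Polynomial.X ^ 2 : ℤ[X])) : PowerSeries ℤ)
      = 1 - PowerSeries.C ((N+1:ℕ) : ℤ) * PowerSeries.X +
        PowerSeries.C (b : ℤ) * PowerSeries.X ^ 2 := by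
    simp only [Polynomial.coe_add, Polynomial.coe_sub, Polynomial.coe_mul, Polynomial.coe_one,
      Polynomial.coe_C, Polynomial.coe_X, Polynomial.coe_pow]
  rw [hpolyc, hcoe]
  -- key counting identities
  have hkey1 : ∀ k : ℕ, (k + 2) * c (k + 2) = (k + 2 + N) * c (k + 1) := by
    intro k
    have := key_id N (k + 1)
    simpa [hc, show k + 1 + 1 = k + 2 by omega, show k + 1 + 1 + N = k + 2 + N by omega] using this
  have hkey2 : ∀ k : ℕ, (k + 1) * c (k + 1) = (k + 1 + N) * c k := by
    intro k
    simpa [hc] using key_id N k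
  have hcpos : ∀ m : ℕ, 0 < c m := fun m => Nat.choose_pos (by omega)
  constructor
  · -- forward: contrapositive
    intro h
    by_contra hab
    push_neg at hab  -- N + 1 ≤ b
    set k := N * N with hk
    have hco := h (k + 2)
    rw [map_sub, coeff2] at hco
    simp only [hfc] at hco
    rw [PowerSeries.coeff_one] at hco
    simp only [if_neg (by omega : ¬ k + 2 = 0)] at hco
    -- derive the strict nat inequality
    have hbig : (k + 2) * ((N + 1) * c (k + 1)) < (k + 2) * (c (k + 2) + b * c k) := by
      have e1 := hkey1 k
      have e2 := hkey2 k
      have hbb : N * (k + 1 + N) < (k + 2) * b := by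
        have h6 : (k + 2) * (N + 1) ≤ (k + 2) * b := Nat.mul_le_mul_left _ hab
        rw [hk] at h6 ⊢
        nlinarith
      have h5 : N * ((k + 1 + N) * c k) < (k + 2) * b * c k := by
        calc N * ((k + 1 + N) * c k) = (N * (k + 1 + N)) * c k := by ring
          _ < ((k + 2) * b) * c k := (Nat.mul_lt_mul_right (hcpos k)).mpr hbb
      rw [← e2] at h5
      calc (k + 2) * ((N + 1) * c (k + 1))
          = (k + 2 + N) * c (k + 1) + N * ((k + 1) * c (k + 1)) := by ring
        _ < (k + 2 + N) * c (k + 1) + (k + 2) * b * c k := by omega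
        _ = (k + 2) * c (k + 2) + (k + 2) * b * c k := by rw [e1]
        _ = (k + 2) * (c (k + 2) + b * c k) := by ring
    have hlt : (N + 1) * c (k + 1) < c (k + 2) + b * c k :=
      Nat.lt_of_mul_lt_mul_left hbig
    have h7 : ((c (k+2) : ℤ)) + b * c k ≤ ((N:ℤ)+1) * c (k+1) := by
      push_cast at hco
      linarith
    have h8 : c (k+2) + b * c k ≤ (N+1) * c (k+1) := by exact_mod_cast h7
    omega
  · -- reverse
    intro hba n
    have hbN : b ≤ N := by omega
    have hN1 : 1 ≤ N := by omega
    rw [map_sub]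
    match n with
    | 0 =>
      rw [coeff0]
      simp only [hfc]
      rw [PowerSeries.coeff_one]
      simp [hc]
    | 1 =>
      rw [coeff1]
      simp only [hfc]
      rw [PowerSeries.coeff_one]
      have h1 : c 1 = N + 1 := by
        simp [hc, Nat.add_comm, Nat.choose_succ_self_right]
      have h0 : c 0 = 1 := by simp [hc]
      rw [h1, h0]
      push_cast
      ring_nf
      simp
    | (k + 2) =>
      rw [coeff2]
      simp only [hfc]
      rw [PowerSeries.coeff_one]
      simp only [if_neg (by omega : ¬ k + 2 = 0)]
      have hle : c (k + 2) + b * c k ≤ (N + 1) * c (k + 1) := by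
        have e1 := hkey1 k
        have e2 := hkey2 k
        have hbb : (k + 2) * b ≤ N * (k + 1 + N) := by
          calc (k + 2) * b ≤ (k + 2) * N := Nat.mul_le_mul_left _ hbN
            _ = N * (k + 2) := Nat.mul_comm _ _
            _ ≤ N * (k + 1 + N) := Nat.mul_le_mul_left _ (by omega)
        have h5 : (k + 2) * b * c k ≤ N * ((k + 1 + N) * c k) := by
          calc (k + 2) * b * c k = ((k + 2) * b) * c k := rfl
            _ ≤ (N * (k + 1 + N)) * c k := Nat.mul_le_mul hbb (le_refl _)
            _ = N * ((k + 1 + N) * c k) := by ring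
        rw [← e2] at h5
        have hmul : (k + 2) * (c (k + 2) + b * c k) ≤ (k + 2) * ((N + 1) * c (k + 1)) := by
          calc (k + 2) * (c (k + 2) + b * c k)
              = (k + 2) * c (k + 2) + (k + 2) * b * c k := by ring
            _ = (k + 2 + N) * c (k + 1) + (k + 2) * b * c k := by rw [e1]
            _ ≤ (k + 2 + N) * c (k + 1) + N * ((k + 1) * c (k + 1)) := by omega
            _ = (k + 2) * ((N + 1) * c (k + 1)) := by ring
        exact Nat.le_of_mul_le_mul_left hmul (by omega)
      have : ((c (k+2) : ℤ)) + b * c k ≤ ((N:ℤ)+1) * c (k+1) := by exact_mod_cast hle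
      push_cast
      linarith
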